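/- Let Ω be a countable linearly ordered set with at least two elements. Then the set of idempotent order-preserving maps f : ℚ → ℚ whose image (with the induced order) is order-isomorphic to Ω has cardinality 2^ℵ0 (the cardinality of the continuum). -/

import Mathlib

open Cardinal

namespace Stmt2Aux

variable {Ω : Type} [LinearOrder Ω]

noncomputable instance denseLexRat : DenselyOrdered (Ω ×ₗ ℚ) where
  dense := by
    rintro _ _ (@⟨a₁, b₁, a₂, b₂, h⟩ | @⟨x, b₁, b₂, h⟩)
    · exact ⟨toLex (a₁, b₁ + 1), Prod.Lex.right _ (lt_add_one b₁), Prod.Lex.left _ _ h⟩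
    · obtain ⟨c, h₁, h₂⟩ := exists_between h
      exact ⟨toLex (x, c), Prod.Lex.right _ h₁, Prod.Lex.right _ h₂⟩

/-- conjugation of a map on the lex product by an order iso to ℚ -/
noncomputable def conj (e : (Ω ×ₗ ℚ) ≃o ℚ) (F : (Ω ×ₗ ℚ) → (Ω ×ₗ ℚ)) : ℚ → ℚ :=
  fun q => e (F (e.symm q))

lemma conj_apply (e : (Ω ×ₗ ℚ) ≃o ℚ) (F : (Ω ×ₗ ℚ) → (Ω ×ₗ ℚ)) (p : Ω ×ₗ ℚ) :
    conj e F (e p) = e (F p) := by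
  simp [conj]

lemma conj_mem (e : (Ω ×ₗ ℚ) ≃o ℚ) (F : (Ω ×ₗ ℚ) → (Ω ×ₗ ℚ))
    (hm : Monotone F) (hi : ∀ p, F (F p) = F p)
    (hr : Nonempty (↥(Set.range F) ≃o Ω)) :
    Monotone (conj e F) ∧ conj e F ∘ conj e F = conj e F ∧
      Nonempty (↥(Set.range (conj e F)) ≃o Ω) := by
  refine ⟨?_, ?_, ?_⟩
  · intro x y h
    exact e.monotone (hm (e.symm.monotone h))
  · funext q
    show conj e F (conj e F q) = conj e F q
    simp only [conj, e.symm_apply_apply, hi]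
  · have hrange : Set.range (conj e F) = (⇑e) '' Set.range F := by
      ext q
      constructor
      · rintro ⟨p, rfl⟩
        exact ⟨F (e.symm p), ⟨_, rfl⟩, rfl⟩
      · rintro ⟨p, ⟨x, rfl⟩, rfl⟩
        exact ⟨e (F x), by simp [conj, hi]⟩
    have h1 : ↥(Set.range (conj e F)) ≃o ↥((⇑e) '' Set.range F) :=
      OrderIso.setCongr _ _ hrange
    have h2 : ↥(Set.range F) ≃o ↥((⇑e) '' Set.range F) :=
      StrictMonoOn.orderIso (⇑e) _ (e.strictMono.strictMonoOn _)
    exact ⟨(h1.trans h2.symm).trans hr.some⟩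

lemma range_iso_of_eq {F : (Ω ×ₗ ℚ) → (Ω ×ₗ ℚ)} {g : Ω → Ω ×ₗ ℚ}
    (hg : StrictMono g) (h : Set.range F = Set.range g) :
    Nonempty (↥(Set.range F) ≃o Ω) :=
  ⟨(OrderIso.setCongr _ _ h).trans (hg.orderIso g).symm⟩

/-! ### Infinite case construction -/

def Fc (c : Ω → ℚ) : (Ω ×ₗ ℚ) → (Ω ×ₗ ℚ) :=
  fun p => toLex ((ofLex p).1, c (ofLex p).1)

lemma Fc_mono (c : Ω → ℚ) : Monotone (Fc c) := by
  intro p q h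
  rcases Prod.Lex.le_iff.mp h with h1 | ⟨h1, _⟩
  · exact Prod.Lex.le_iff.mpr (Or.inl h1)
  · exact Prod.Lex.le_iff.mpr (Or.inr ⟨h1, by simp [Fc, h1]⟩)

lemma Fc_idem (c : Ω → ℚ) (p : Ω ×ₗ ℚ) : Fc c (Fc c p) = Fc c p := rfl

lemma graph_strictMono (c : Ω → ℚ) : StrictMono (fun x : Ω => toLex (x, c x)) := by
  intro x y h
  exact Prod.Lex.lt_iff.mpr (Or.inl h)

lemma Fc_range (c : Ω → ℚ) :
    Set.range (Fc c) = Set.range (fun x : Ω => toLex (x, c x)) := by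
  ext p
  constructor
  · rintro ⟨q, rfl⟩; exact ⟨(ofLex q).1, rfl⟩
  · rintro ⟨x, rfl⟩; exact ⟨toLex (x, c x), rfl⟩

/-! ### Finite case construction -/

open Classical in
/-- first coordinate of the finite-case retraction -/
noncomputable def phi (a b : Ω) (r : ℝ) (p : Ω ×ₗ ℚ) : Ω :=
  if (ofLex p).1 = a ∧ r ≤ ((ofLex p).2 : ℝ) then b else (ofLex p).1

/-- idempotent monotone map depending on a real parameter `r` -/
noncomputable def G (a b : Ω) (r : ℝ) : (Ω ×ₗ ℚ) → (Ω ×ₗ ℚ) :=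
  fun p => toLex (phi a b r p, (0 : ℚ))

section Finite

variable {a b : Ω} {r : ℝ}
  (hmin : ∀ x : Ω, a ≤ x) (hab : a < b) (hadj : ∀ x : Ω, a < x → b ≤ x) (hr0 : 0 < r)

include hmin hab hadj in
lemma phi_le (p q : Ω ×ₗ ℚ) (h : p ≤ q) : phi a b r p ≤ phi a b r q := by
  classical
  rcases Prod.Lex.le_iff.mp h with h1 | ⟨h1, h2⟩
  · have hqa : ¬((ofLex q).1 = a ∧ r ≤ ((ofLex q).2 : ℝ)) := by
      rintro ⟨hqa, -⟩
      exact absurd (hqa ▸ h1) (not_lt.mpr (hmin _))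
    rw [phi, phi, if_neg hqa]
    split_ifs with hc
    · exact hadj _ (hc.1 ▸ h1)
    · exact h1.le
  · have himp : ((ofLex p).1 = a ∧ r ≤ ((ofLex p).2 : ℝ)) →
        ((ofLex q).1 = a ∧ r ≤ ((ofLex q).2 : ℝ)) :=
      fun hc => ⟨h1.symm.trans hc.1, hc.2.trans (Rat.cast_le.mpr h2)⟩
    rw [phi, phi]
    split_ifs with hc hd hd
    · exact le_refl b
    · exact absurd (himp hc) hd
    · exact le_of_le_of_eq (le_of_eq h1) hd.1 |>.trans hab.le
    · exact h1.le

include hmin hab hadj in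
lemma G_mono : Monotone (G a b r) := by
  intro p q h
  have := phi_le hmin hab hadj p q h (r := r)
  rcases lt_or_eq_of_le this with h' | h'
  · exact Prod.Lex.le_iff.mpr (Or.inl h')
  · exact Prod.Lex.le_iff.mpr (Or.inr ⟨h', le_refl _⟩)

lemma phi_apply_zero (hr0 : 0 < r) (x : Ω) : phi a b r (toLex (x, (0:ℚ))) = x := by
  classical
  simp only [phi, ofLex_toLex]
  refine if_neg ?_
  rintro ⟨-, hle⟩
  exact absurd hle (not_le.mpr (by exact_mod_cast hr0))

lemma G_idem (hr0 : 0 < r) (p : Ω ×ₗ ℚ) : G a b r (G a b r p) = G a b r p := by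
  rw [G, G, phi_apply_zero hr0]

lemma G_range (hr0 : 0 < r) :
    Set.range (G a b r) = Set.range (fun x : Ω => toLex (x, (0:ℚ))) := by
  ext p
  constructor
  · rintro ⟨q, rfl⟩; exact ⟨phi a b r q, rfl⟩
  · rintro ⟨x, rfl⟩
    exact ⟨toLex (x, (0:ℚ)), by rw [G, phi_apply_zero hr0]⟩

lemma phi_apply_mid (hab : a < b) {q : ℚ} (hq : r ≤ (q : ℝ)) :
    phi a b r (toLex (a, q)) = b := by
  classical
  simp [phi, hq]

lemma phi_apply_mid' {q : ℚ} (hq : (q : ℝ) < r) :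
    phi a b r (toLex (a, q)) = a := by
  classical
  simp [phi, hq.not_ge]

end Finite

end Stmt2Aux

open Stmt2Aux in
/-- for a countable linear order Ω with at least two elements, the
set of idempotent order-preserving maps `ℚ → ℚ` whose image is order-isomorphic
to Ω has cardinality the continuum. -/
theorem stmt_2 (Ω : Type) [LinearOrder Ω] [Countable Ω]
    (hΩ : ∃ a b : Ω, a ≠ b) :
    Cardinal.mk {f : ℚ → ℚ // Monotone f ∧ f ∘ f = f ∧
      Nonempty (↥(Set.range f) ≃o Ω)} = Cardinal.continuum := by
  classical
  obtain ⟨a0, b0, hab0⟩ := hΩ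
  haveI : Nonempty Ω := ⟨a0⟩
  haveI : Countable (Ω ×ₗ ℚ) := inferInstanceAs (Countable (Ω × ℚ))
  haveI : Nonempty (Ω ×ₗ ℚ) := inferInstanceAs (Nonempty (Ω × ℚ))
  obtain ⟨e⟩ : Nonempty ((Ω ×ₗ ℚ) ≃o ℚ) := Order.iso_of_countable_dense (Ω ×ₗ ℚ) ℚ
  set P : Set (ℚ → ℚ) := {f : ℚ → ℚ | Monotone f ∧ f ∘ f = f ∧
      Nonempty (↥(Set.range f) ≃o Ω)} with hP
  apply le_antisymm
  · calc Cardinal.mk {f : ℚ → ℚ // Monotone f ∧ f ∘ f = f ∧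
        Nonempty (↥(Set.range f) ≃o Ω)} ≤ Cardinal.mk (ℚ → ℚ) := mk_subtype_le _
    _ = Cardinal.continuum := by
        rw [← Cardinal.power_def, Cardinal.mk_eq_aleph0 ℚ, Cardinal.aleph0_power_aleph0]
  · cases finite_or_infinite Ω with
    | inr hinf =>
      -- infinite case: inject (Ω → ℚ)
      have key : ∀ c : Ω → ℚ, Monotone (conj e (Fc c)) ∧
          conj e (Fc c) ∘ conj e (Fc c) = conj e (Fc c) ∧
          Nonempty (↥(Set.range (conj e (Fc c))) ≃o Ω) := fun c =>
        conj_mem e (Fc c) (Fc_mono c) (Fc_idem c)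
          (range_iso_of_eq (graph_strictMono c) (Fc_range c))
      have hinj : Function.Injective (fun c : Ω → ℚ =>
          (⟨conj e (Fc c), key c⟩ : {f : ℚ → ℚ // Monotone f ∧ f ∘ f = f ∧
            Nonempty (↥(Set.range f) ≃o Ω)})) := by
        intro c c' h
        funext x
        have h' : conj e (Fc c) = conj e (Fc c') := congrArg Subtype.val h
        have := congrFun h' (e (toLex (x, (0:ℚ))))
        rw [conj_apply, conj_apply] at this
        have h2 : Fc c (toLex (x, (0:ℚ))) = Fc c' (toLex (x, (0:ℚ))) := e.injective this
        have h3 : (x, c x) = (x, c' x) := toLex.injective h2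
        exact (Prod.mk.injEq _ _ _ _).mp h3 |>.2
      calc Cardinal.continuum = Cardinal.mk (Ω → ℚ) := by
            rw [← Cardinal.power_def, Cardinal.mk_eq_aleph0 ℚ, Cardinal.mk_eq_aleph0 Ω,
              Cardinal.aleph0_power_aleph0]
        _ ≤ _ := Cardinal.mk_le_of_injective hinj
    | inl hfin =>
      -- finite case: adjacent pair at the bottom
      haveI : Finite Ω := hfin
      obtain ⟨a, -, hmin'⟩ := Set.exists_min_image (Set.univ : Set Ω) id
        Set.finite_univ ⟨a0, trivial⟩
      have hmin : ∀ x : Ω, a ≤ x := fun x => hmin' x trivial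
      have hSne : ({x : Ω | a < x}).Nonempty := by
        rcases eq_or_ne a0 a with rfl | hne
        · exact ⟨b0, lt_of_le_of_ne (hmin b0) hab0⟩
        · exact ⟨a0, lt_of_le_of_ne (hmin a0) (Ne.symm hne)⟩
      obtain ⟨b, hbS, hadj'⟩ := Set.exists_min_image ({x : Ω | a < x}) id
        (Set.toFinite _) hSne
      have hab : a < b := hbS
      have hadj : ∀ x : Ω, a < x → b ≤ x := fun x hx => hadj' x hx
      have key : ∀ r : Set.Ioo (0:ℝ) 1, Monotone (conj e (G a b r)) ∧
          conj e (G a b r) ∘ conj e (G a b r) = conj e (G a b r) ∧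
          Nonempty (↥(Set.range (conj e (G a b r))) ≃o Ω) := fun r =>
        conj_mem e (G a b r) (G_mono hmin hab hadj) (G_idem r.2.1)
          (range_iso_of_eq (graph_strictMono (fun _ => (0:ℚ))) (G_range r.2.1))
      have hinj : Function.Injective (fun r : Set.Ioo (0:ℝ) 1 =>
          (⟨conj e (G a b r), key r⟩ : {f : ℚ → ℚ // Monotone f ∧ f ∘ f = f ∧
            Nonempty (↥(Set.range f) ≃o Ω)})) := by
        intro r r' h
        have h' : conj e (G a b r) = conj e (G a b r') := congrArg Subtype.val h
        by_contra hne
        have hne' : (r : ℝ) ≠ (r' : ℝ) := fun hh => hne (Subtype.ext hh)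
        rcases hne'.lt_or_gt with hlt | hlt
        all_goals {
          first
          | (obtain ⟨q, hq1, hq2⟩ := exists_rat_btwn hlt
             have := congrFun h' (e (toLex (a, q)))
             rw [conj_apply, conj_apply] at this
             have h2 := e.injective this
             rw [G, G] at h2
             first
             | (rw [phi_apply_mid hab hq1.le, phi_apply_mid' hq2] at h2
                exact absurd (((Prod.mk.injEq _ _ _ _).mp (toLex.injective h2)).1)
                  (Ne.symm hab.ne))
             | (rw [phi_apply_mid' hq2, phi_apply_mid hab hq1.le] at h2
                exact absurd (((Prod.mk.injEq _ _ _ _).mp (toLex.injective h2)).1) hab.ne))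
        }
      calc Cardinal.continuum = Cardinal.mk (Set.Ioo (0:ℝ) 1) :=
            (Cardinal.mk_Ioo_real (by norm_num)).symm
        _ ≤ _ := Cardinal.mk_le_of_injective hinj
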